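/- Let E be a directed graph on a vertex type V with topological order O, let v, w be vertices with no path from w to v under E, and let u, x be vertices with a path from w to u under E, an arc E u x, and O u < O v. Then there is no path from x to v under E and no path from v to u under E (so vertex v and the arc (u,x) do not lie on a common path in E), but there is a path from v to u under E + (v,w) (so vertex v and the arc (u,x) lie on a common path in E + (v,w)). -/

import Mathlib

/-- An arc `(u,x)` traversed forward within the affected region (`O u < O v`)
is newly related to the vertex `v`: vertex `v` and the arc `(u,x)` do not lie
on a common path in `E`, but they do in `E + (v,w)`. -/
theorem forward_arc_newly_related_to_v
    {V α : Type*} [LinearOrder α]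
    (E : V → V → Prop) (O : V → α)
    (hOinj : Function.Injective O)
    (hOtopo : ∀ a b, E a b → O a < O b)
    (v w u x : V)
    (hnopath : ¬ Relation.ReflTransGen E w v)
    (hwu : Relation.ReflTransGen E w u)
    (hux : E u x)
    (huv : O u < O v) :
    ¬ Relation.ReflTransGen E x v ∧
    ¬ Relation.ReflTransGen E v u ∧
    Relation.ReflTransGen (fun a b => E a b ∨ (a = v ∧ b = w)) v u := by
  have mono : ∀ a b, Relation.ReflTransGen E a b → O a ≤ O b := by
    intro a b h
    induction h with
    | refl => exact le_refl _
    | tail _ hbc ih => exact ih.trans (hOtopo _ _ hbc).le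
  refine ⟨?_, ?_, ?_⟩
  · intro hxv
    exact hnopath ((hwu.tail hux).trans hxv)
  · intro hvu
    exact absurd (mono _ _ hvu) (not_le.mpr huv)
  · exact Relation.ReflTransGen.trans
      (Relation.ReflTransGen.single (Or.inr ⟨rfl, rfl⟩))
      (Relation.ReflTransGen.mono (fun a b h => Or.inl h) _ _ hwu)
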